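/- Let T[ρ] = Σ_k M_k ρ M_k† be a trace-preserving completely positive map on a finite-dimensional Hilbert space H = H_S ⊕ H_R, with each Kraus operator written in block form M_k = [[M_{k,S}, M_{k,P}],[M_{k,Q}, M_{k,R}]]. Then the set of density operators with support contained in H_S is invariant under T if and only if M_{k,Q} = 0 for all k. -/

import Mathlib

open Matrix Finset
open scoped ComplexOrder

private lemma toBlocks₁₂_sum {K m r : ℕ} (f : Fin K → Matrix (Fin m ⊕ Fin r) (Fin m ⊕ Fin r) ℂ) :
    (∑ k, f k).toBlocks₁₂ = ∑ k, (f k).toBlocks₁₂ := by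
  ext i j; simp [Matrix.toBlocks₁₂, Matrix.sum_apply]

private lemma toBlocks₂₁_sum {K m r : ℕ} (f : Fin K → Matrix (Fin m ⊕ Fin r) (Fin m ⊕ Fin r) ℂ) :
    (∑ k, f k).toBlocks₂₁ = ∑ k, (f k).toBlocks₂₁ := by
  ext i j; simp [Matrix.toBlocks₂₁, Matrix.sum_apply]

private lemma toBlocks₂₂_sum {K m r : ℕ} (f : Fin K → Matrix (Fin m ⊕ Fin r) (Fin m ⊕ Fin r) ℂ) :
    (∑ k, f k).toBlocks₂₂ = ∑ k, (f k).toBlocks₂₂ := by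
  ext i j; simp [Matrix.toBlocks₂₂, Matrix.sum_apply]

private lemma sandwich_blocks {m r : ℕ} (X : Matrix (Fin m ⊕ Fin r) (Fin m ⊕ Fin r) ℂ)
    (σ : Matrix (Fin m) (Fin m) ℂ) :
    X * Matrix.fromBlocks σ 0 0 0 * Xᴴ =
      Matrix.fromBlocks (X.toBlocks₁₁ * σ * (X.toBlocks₁₁)ᴴ) (X.toBlocks₁₁ * σ * (X.toBlocks₂₁)ᴴ)
        (X.toBlocks₂₁ * σ * (X.toBlocks₁₁)ᴴ) (X.toBlocks₂₁ * σ * (X.toBlocks₂₁)ᴴ) := by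
  rw [← Matrix.fromBlocks_toBlocks X]
  simp [Matrix.fromBlocks_conjTranspose, Matrix.fromBlocks_multiply, Matrix.mul_assoc]

private lemma diag_entry_nonneg {r m : ℕ} (C : Matrix (Fin r) (Fin m) ℂ) (i : Fin r) :
    0 ≤ (C * Cᴴ) i i := by
  have : (C * Cᴴ) i i = dotProduct (C i) (star (C i)) := by
    simp [Matrix.mul_apply, dotProduct, Matrix.conjTranspose_apply]
  rw [this]
  exact dotProduct_self_star_nonneg _

private lemma sum_self_conjTranspose_eq_zero {K r m : ℕ}
    (C : Fin K → Matrix (Fin r) (Fin m) ℂ)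
    (h : ∑ k, C k * (C k)ᴴ = 0) (k : Fin K) : C k = 0 := by
  ext i j
  have hrow : C k i = 0 := by
    have hsum : ∑ k', ((C k' * (C k')ᴴ) i i) = 0 := by
      have := congrFun (congrFun h i) i
      simpa [Matrix.sum_apply] using this
    have hk : (C k * (C k)ᴴ) i i = 0 :=
      (Finset.sum_eq_zero_iff_of_nonneg (fun k' _ => diag_entry_nonneg (C k') i)).mp hsum k
        (Finset.mem_univ k)
    have : dotProduct (C k i) (star (C k i)) = 0 := by
      rw [← hk]; simp [Matrix.mul_apply, dotProduct, Matrix.conjTranspose_apply]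
    exact dotProduct_self_star_eq_zero.mp this
  simpa using congrFun hrow j

/-- invariance of the set of density operators supported on `H_S`
holds iff all lower-left Kraus blocks vanish. -/
theorem invariance_iff_lower_left_blocks_vanish
    (m r K : ℕ) (hm : 0 < m)
    (M : Fin K → Matrix (Fin m ⊕ Fin r) (Fin m ⊕ Fin r) ℂ)
    (hTP : ∑ k, (M k)ᴴ * M k = 1) :
    (∀ ρ : Matrix (Fin m ⊕ Fin r) (Fin m ⊕ Fin r) ℂ,
        ρ.PosSemidef → ρ.trace = 1 →
        ρ.toBlocks₁₂ = 0 → ρ.toBlocks₂₁ = 0 → ρ.toBlocks₂₂ = 0 →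
        ((∑ k, M k * ρ * (M k)ᴴ).toBlocks₁₂ = 0 ∧
         (∑ k, M k * ρ * (M k)ᴴ).toBlocks₂₁ = 0 ∧
         (∑ k, M k * ρ * (M k)ᴴ).toBlocks₂₂ = 0)) ↔
    (∀ k, (M k).toBlocks₂₁ = 0) := by
  constructor
  · intro h
    -- use the maximally mixed state on H_S
    set σ : Matrix (Fin m) (Fin m) ℂ := ((m : ℂ))⁻¹ • 1 with hσ
    set ρ : Matrix (Fin m ⊕ Fin r) (Fin m ⊕ Fin r) ℂ := Matrix.fromBlocks σ 0 0 0 with hρ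
    have hmC : (m : ℂ) ≠ 0 := Nat.cast_ne_zero.mpr hm.ne'
    have key : (star ((Real.sqrt (m:ℝ)⁻¹ : ℝ) : ℂ)) * ((Real.sqrt (m:ℝ)⁻¹ : ℝ) : ℂ)
        = ((m:ℂ))⁻¹ := by
      rw [Complex.star_def, Complex.conj_ofReal, ← Complex.ofReal_mul,
        Real.mul_self_sqrt (by positivity : (0:ℝ) ≤ (m : ℝ)⁻¹)]
      push_cast
      ring
    have key2 : ((Real.sqrt (m:ℝ)⁻¹ : ℝ) : ℂ) * (star ((Real.sqrt (m:ℝ)⁻¹ : ℝ) : ℂ))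
        = ((m:ℂ))⁻¹ := by rw [mul_comm]; exact key
    have hpsd : ρ.PosSemidef := by
      suffices hB : ∃ B : Matrix (Fin m ⊕ Fin r) (Fin m ⊕ Fin r) ℂ, ρ = Bᴴ * B by
        obtain ⟨B, hB⟩ := hB; rw [hB]; exact Matrix.posSemidef_conjTranspose_mul_self B
      refine ⟨Matrix.fromBlocks (((Real.sqrt (m:ℝ)⁻¹ : ℝ) : ℂ) • 1) 0 0 0, ?_⟩
      rw [hρ, hσ, Matrix.fromBlocks_conjTranspose]
      simp only [Matrix.conjTranspose_smul, Matrix.conjTranspose_one, Matrix.conjTranspose_zero,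
        Matrix.fromBlocks_multiply, Matrix.smul_mul, Matrix.mul_smul, Matrix.mul_one,
        Matrix.mul_zero, Matrix.zero_mul, smul_smul, smul_zero, add_zero, zero_add, key, key2]
    have htr : ρ.trace = 1 := by
      rw [hρ]
      have : (Matrix.fromBlocks σ 0 0 (0 : Matrix (Fin r) (Fin r) ℂ)).trace = σ.trace := by
        simp [Matrix.trace, Matrix.diag, Fintype.sum_sum_type, Matrix.fromBlocks]
      rw [this, hσ, Matrix.trace_smul, Matrix.trace_one]
      simp [inv_mul_cancel₀ hmC]
    obtain ⟨-, -, h22⟩ := h ρ hpsd htr (by simp [hρ]) (by simp [hρ]) (by simp [hρ])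
    have h22' : ∑ k, (M k).toBlocks₂₁ * σ * ((M k).toBlocks₂₁)ᴴ = 0 := by
      rw [toBlocks₂₂_sum] at h22
      calc ∑ k, (M k).toBlocks₂₁ * σ * ((M k).toBlocks₂₁)ᴴ
          = ∑ k, (M k * ρ * (M k)ᴴ).toBlocks₂₂ := by
            refine Finset.sum_congr rfl fun k _ => ?_
            rw [hρ, sandwich_blocks]; simp
        _ = 0 := h22
    have hsum : ∑ k, (M k).toBlocks₂₁ * ((M k).toBlocks₂₁)ᴴ = 0 := by
      have : ((m : ℂ))⁻¹ • ∑ k, (M k).toBlocks₂₁ * ((M k).toBlocks₂₁)ᴴ = 0 := by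
        rw [Finset.smul_sum, ← h22']
        refine Finset.sum_congr rfl fun k _ => ?_
        rw [hσ]
        simp [Matrix.mul_smul, Matrix.smul_mul]
      have hinv : ((m : ℂ))⁻¹ ≠ 0 := inv_ne_zero hmC
      exact (smul_eq_zero.mp this).resolve_left hinv
    exact sum_self_conjTranspose_eq_zero _ hsum
  · intro h ρ _ _ h12 h21 h22
    have hρ : ρ = Matrix.fromBlocks ρ.toBlocks₁₁ 0 0 0 := by
      conv_lhs => rw [← Matrix.fromBlocks_toBlocks ρ]
      rw [h12, h21, h22]
    have key : ∀ k, M k * ρ * (M k)ᴴ =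
        Matrix.fromBlocks ((M k).toBlocks₁₁ * ρ.toBlocks₁₁ * ((M k).toBlocks₁₁)ᴴ) 0 0 0 := by
      intro k
      rw [hρ, sandwich_blocks, h k]
      simp
    refine ⟨?_, ?_, ?_⟩
    · rw [toBlocks₁₂_sum]
      refine Finset.sum_eq_zero fun k _ => ?_
      rw [key k]; simp
    · rw [toBlocks₂₁_sum]
      refine Finset.sum_eq_zero fun k _ => ?_
      rw [key k]; simp
    · rw [toBlocks₂₂_sum]
      refine Finset.sum_eq_zero fun k _ => ?_
      rw [key k]; simp
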